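/- Let m ∈ ℕ, let p_0, …, p_{2^m−1} ∈ [0,1) with ∑_{k=0}^{2^m−1} p_k = 1, let f_k(x) = (x+k)/2^m, and let μ be a Borel probability measure on [0,1] satisfying μ(B) = ∑_{k=0}^{2^m−1} p_k · μ(f_k^{-1}(B)) for every Borel set B ⊆ [0,1]. Then the probability distribution function Φ(x) = μ([0,x]) satisfies Φ(x) = ∑_{k=0}^{2^m−1} [Φ((x+k)/2^m) − Φ(k/2^m)] for every x ∈ [0,1]. -/

import Mathlib

open MeasureTheory

/-- The distribution function `Φ(x) = μ([0,x])` of an invariant measure for the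
IFS `f_k(x) = (x+k)/2^m` with probabilities `p_k` satisfies the self-similarity relation
`Φ(x) = ∑_{k=0}^{2^m−1} [Φ((x+k)/2^m) − Φ(k/2^m)]` on `[0,1]`. -/
theorem stmt_9 (m : ℕ) (hm : 1 ≤ m) (p : ℕ → ℝ)
    (hp : ∀ k < 2 ^ m, p k ∈ Set.Ico (0:ℝ) 1)
    (hsum : ∑ k ∈ Finset.range (2 ^ m), p k = 1)
    (μ : Measure ℝ) [IsProbabilityMeasure μ] (hμ : μ (Set.Icc (0:ℝ) 1) = 1)
    (hinv : ∀ B ⊆ Set.Icc (0:ℝ) 1, MeasurableSet B →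
      μ B = ∑ k ∈ Finset.range (2 ^ m),
        ENNReal.ofReal (p k) * μ ((fun x : ℝ => (x + k) / 2 ^ m) ⁻¹' B))
    (Φ : ℝ → ℝ) (hΦ : ∀ x, Φ x = (μ (Set.Icc 0 x)).toReal) :
    ∀ x ∈ Set.Icc (0:ℝ) 1,
      Φ x = ∑ k ∈ Finset.range (2 ^ m), (Φ ((x + k) / 2 ^ m) - Φ (k / 2 ^ m)) := by
  have h2m : (0:ℝ) < 2 ^ m := by positivity
  -- complement of [0,1] is null
  have hc : μ (Set.Icc (0:ℝ) 1)ᶜ = 0 := by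
    have := measure_compl (measurableSet_Icc (a := (0:ℝ)) (b := 1))
      (by rw [hμ]; exact ENNReal.one_ne_top)
    rw [hμ, measure_univ] at this
    simpa using this
  have hinter : ∀ S : Set ℝ, μ S = μ (S ∩ Set.Icc 0 1) :=
    fun S => (measure_inter_conull hc).symm
  -- μ{0} = 0
  have h0 : μ {(0:ℝ)} = 0 := by
    have hsub : ({(0:ℝ)} : Set ℝ) ⊆ Set.Icc 0 1 := by
      simp [Set.singleton_subset_iff]
    have h := hinv {0} hsub (measurableSet_singleton 0)
    have hpre : ∀ k : ℕ, (fun x : ℝ => (x + k) / 2 ^ m) ⁻¹' {0} = {-(k:ℝ)} := by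
      intro k
      ext y
      simp only [Set.mem_preimage, Set.mem_singleton_iff]
      rw [div_eq_zero_iff]
      constructor
      · rintro (h | h)
        · linarith
        · exact absurd h (ne_of_gt h2m)
      · intro h; left; linarith
    rw [Finset.sum_congr rfl (fun k _ => by rw [hpre k])] at h
    have hzero : ∀ k ∈ Finset.range (2 ^ m), k ≠ 0 →
        ENNReal.ofReal (p k) * μ {-(k:ℝ)} = 0 := by
      intro k _ hk
      have : μ {-(k:ℝ)} = 0 := by
        rw [hinter]
        have : ({-(k:ℝ)} : Set ℝ) ∩ Set.Icc 0 1 = ∅ := by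
          apply Set.eq_empty_of_forall_notMem
          intro y hy
          obtain ⟨hy1, hy2⟩ := hy
          rw [Set.mem_singleton_iff] at hy1
          have hk1 : (1:ℝ) ≤ (k:ℝ) := by exact_mod_cast Nat.one_le_iff_ne_zero.2 hk
          have := hy2.1
          rw [hy1] at this
          linarith
        rw [this, measure_empty]
      rw [this, mul_zero]
    rw [Finset.sum_eq_single 0 hzero (fun h => absurd (Finset.mem_range.2 (by positivity)) h)] at h
    simp only [Nat.cast_zero, neg_zero] at h
    by_contra hne
    have hlt : ENNReal.ofReal (p 0) < 1 :=
      ENNReal.ofReal_lt_one.2 (hp 0 (by positivity)).2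
    have htop : μ {(0:ℝ)} ≠ ⊤ := measure_ne_top μ _
    have : ENNReal.ofReal (p 0) * μ {(0:ℝ)} < 1 * μ {(0:ℝ)} :=
      ENNReal.mul_lt_mul_left hne htop hlt
    rw [one_mul, ← h] at this
    exact lt_irrefl _ this
  -- key computation
  have key : ∀ (k : ℕ), k < 2 ^ m → ∀ t ∈ Set.Icc (0:ℝ) 1,
      μ (Set.Icc 0 ((t + k) / 2 ^ m)) =
        (∑ j ∈ Finset.range k, ENNReal.ofReal (p j)) +
          ENNReal.ofReal (p k) * μ (Set.Icc 0 t) := by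
    intro k hk t ht
    obtain ⟨ht0, ht1⟩ := ht
    have hkr : (k:ℝ) + 1 ≤ 2 ^ m := by exact_mod_cast hk
    have hBsub : Set.Icc (0:ℝ) ((t + k) / 2 ^ m) ⊆ Set.Icc 0 1 := by
      apply Set.Icc_subset_Icc le_rfl
      rw [div_le_one h2m]; linarith
    have h := hinv _ hBsub measurableSet_Icc
    have hpre : ∀ j : ℕ, (fun x : ℝ => (x + j) / 2 ^ m) ⁻¹' Set.Icc 0 ((t + k) / 2 ^ m)
        = Set.Icc (-(j:ℝ)) (t + k - j) := by
      intro j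
      ext y
      simp only [Set.mem_preimage, Set.mem_Icc]
      rw [le_div_iff₀ h2m, div_le_div_iff₀ h2m h2m]
      constructor <;> intro hh <;> constructor <;> nlinarith [hh.1, hh.2]
    have hterm : ∀ j ∈ Finset.range (2 ^ m),
        ENNReal.ofReal (p j) * μ ((fun x : ℝ => (x + j) / 2 ^ m) ⁻¹' Set.Icc 0 ((t + k) / 2 ^ m))
        = if j < k then ENNReal.ofReal (p j)
          else if j = k then ENNReal.ofReal (p k) * μ (Set.Icc 0 t) else 0 := by
      intro j hj
      rw [hpre j]
      rcases lt_trichotomy j k with hjk | hjk | hjk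
      · rw [if_pos hjk]
        have hjk' : (j:ℝ) + 1 ≤ k := by exact_mod_cast hjk
        have hsub2 : Set.Icc (0:ℝ) 1 ⊆ Set.Icc (-(j:ℝ)) (t + k - j) :=
          Set.Icc_subset_Icc (by have : (0:ℝ) ≤ j := Nat.cast_nonneg j; linarith)
            (by linarith)
        have h1 : μ (Set.Icc (-(j:ℝ)) (t + k - j)) = 1 := by
          refine le_antisymm prob_le_one ?_
          calc (1:ENNReal) = μ (Set.Icc 0 1) := hμ.symm
            _ ≤ _ := measure_mono hsub2
        rw [h1, mul_one]
      · subst hjk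
        rw [if_neg (lt_irrefl j), if_pos rfl]
        congr 1
        rw [hinter (Set.Icc (-(j:ℝ)) (t + j - j)), hinter (Set.Icc 0 t)]
        congr 1
        rw [Set.Icc_inter_Icc, Set.Icc_inter_Icc]
        have he : t + (j:ℝ) - j = t := by ring
        rw [he, max_eq_right (by simp), max_self]
      · rw [if_neg (not_lt.2 hjk.le), if_neg (ne_of_gt hjk)]
        have hjk' : (k:ℝ) + 1 ≤ j := by exact_mod_cast hjk
        have hz : μ (Set.Icc (-(j:ℝ)) (t + k - j)) = 0 := by
          refine le_antisymm ?_ zero_le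
          rw [hinter]
          calc μ (Set.Icc (-(j:ℝ)) (t + k - j) ∩ Set.Icc 0 1)
              ≤ μ {(0:ℝ)} := by
                apply measure_mono
                intro y hy
                obtain ⟨⟨_, hy2⟩, hy3, _⟩ := hy
                have : y = 0 := le_antisymm (by linarith) hy3
                simp [this]
            _ = 0 := h0
        rw [hz, mul_zero]
    rw [h, Finset.sum_congr rfl hterm]
    rw [← Finset.sum_subset (Finset.range_subset_range.2 hk)
      (fun j _ hj => by
        rw [Finset.mem_range, not_lt] at hj
        rw [if_neg (by omega), if_neg (by omega)])]
    rw [Finset.sum_range_succ, if_neg (lt_irrefl k), if_pos rfl]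
    congr 1
    exact Finset.sum_congr rfl (fun j hj => if_pos (Finset.mem_range.1 hj))
  -- now the main computation
  intro x hx
  have hfin : ∀ S : Set ℝ, μ S ≠ ⊤ := fun S => measure_ne_top μ S
  have hΦterm : ∀ (k : ℕ), k < 2 ^ m → ∀ t ∈ Set.Icc (0:ℝ) 1,
      Φ ((t + k) / 2 ^ m) = (∑ j ∈ Finset.range k, p j) + p k * Φ t := by
    intro k hk t ht
    rw [hΦ, key k hk t ht, ENNReal.toReal_add (by
        rw [← ENNReal.ofReal_sum_of_nonneg (fun j hj => (hp j (lt_trans (Finset.mem_range.1 hj) hk)).1)]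
        exact ENNReal.ofReal_ne_top)
      (ENNReal.mul_ne_top ENNReal.ofReal_ne_top (hfin _))]
    rw [← ENNReal.ofReal_sum_of_nonneg (fun j hj => (hp j (lt_trans (Finset.mem_range.1 hj) hk)).1)]
    rw [ENNReal.toReal_ofReal (Finset.sum_nonneg (fun j hj => (hp j (lt_trans (Finset.mem_range.1 hj) hk)).1))]
    rw [ENNReal.toReal_mul, ENNReal.toReal_ofReal (hp k hk).1, hΦ t]
  have hterm2 : ∀ k ∈ Finset.range (2 ^ m),
      Φ ((x + k) / 2 ^ m) - Φ (k / 2 ^ m) = p k * Φ x := by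
    intro k hk
    rw [Finset.mem_range] at hk
    have h1 := hΦterm k hk x hx
    have h2 := hΦterm k hk 0 (by constructor <;> norm_num)
    rw [zero_add] at h2
    have hΦ0 : Φ 0 = 0 := by
      rw [hΦ, Set.Icc_self, h0, ENNReal.toReal_zero]
    rw [h1, h2, hΦ0, mul_zero, add_zero]
    ring
  rw [Finset.sum_congr rfl hterm2, ← Finset.sum_mul, hsum, one_mul]
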